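/- For any real v and any b > 0, the standard normal CDF satisfies Φ(v) < (e^{b²}·Φ(v+b) + e^{b²/2 − b·v}·Φ(v−b)) / (1 + e^{b²/2 − b·v}). -/

import Mathlib

open MeasureTheory ProbabilityTheory Real Set Filter Topology

noncomputable def Φ (x : ℝ) : ℝ := ∫ t in Set.Iic x, Real.exp (-t^2/2) / Real.sqrt (2*Real.pi)

namespace Stmt1Aux

noncomputable def φ (t : ℝ) : ℝ := Real.exp (-t^2/2) / Real.sqrt (2*Real.pi)

lemma φ_pos (t : ℝ) : 0 < φ t :=
  div_pos (exp_pos _) (sqrt_pos.mpr (by positivity))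

lemma φ_cont : Continuous φ := by
  unfold φ; fun_prop

lemma φ_integrable : Integrable φ := by
  have h := (integrable_exp_neg_mul_sq (b := (1:ℝ)/2) (by norm_num)).mul_const
    (Real.sqrt (2*Real.pi))⁻¹
  refine h.congr (Eventually.of_forall fun t => ?_)
  simp only [φ, div_eq_mul_inv]
  ring_nf

lemma Φ_eq (a x : ℝ) : Φ x = Φ a + ∫ t in a..x, φ t := by
  have h := intervalIntegral.integral_Iic_sub_Iic (μ := volume) (f := φ)
    (a := a) (b := x) φ_integrable.integrableOn φ_integrable.integrableOn
  simp only [Φ]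
  have : (∫ t in Set.Iic x, Real.exp (-t^2/2) / Real.sqrt (2*Real.pi)) = ∫ t in Set.Iic x, φ t := rfl
  rw [this, show (∫ t in Set.Iic a, Real.exp (-t^2/2) / Real.sqrt (2*Real.pi)) = ∫ t in Set.Iic a, φ t from rfl]
  linarith

lemma Φ_hasDeriv (x : ℝ) : HasDerivAt Φ (φ x) x := by
  have h : HasDerivAt (fun u => ∫ t in (0:ℝ)..u, φ t) (φ x) x :=
    intervalIntegral.integral_hasDerivAt_right
      (φ_integrable.intervalIntegrable)
      (φ_cont.stronglyMeasurableAtFilter _ _)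
      φ_cont.continuousAt
  have he : Φ = fun u => Φ 0 + ∫ t in (0:ℝ)..u, φ t := funext fun u => Φ_eq 0 u
  rw [he]
  exact h.const_add _

lemma Φ_lt {x y : ℝ} (h : x < y) : Φ x < Φ y := by
  have hp : 0 < ∫ t in x..y, φ t :=
    intervalIntegral.intervalIntegral_pos_of_pos
      (φ_integrable.intervalIntegrable) (fun t => φ_pos t) h
  have := Φ_eq x y
  linarith

lemma Φ_nonneg (x : ℝ) : 0 ≤ Φ x :=
  setIntegral_nonneg measurableSet_Iic fun t _ => (φ_pos t).le

lemma exp_integrableOn_Iic {c : ℝ} (hc : 0 < c) (x : ℝ) :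
    IntegrableOn (fun t => Real.exp (c*t)) (Iic x) := by
  refine integrableOn_Iic_of_intervalIntegral_norm_bounded (exp (c*x)/c) x
    (fun y => ((Real.continuous_exp.comp (continuous_const.mul continuous_id)).intervalIntegrable _ _).1) tendsto_id
    (Eventually.of_forall fun y => ?_)
  simp only [id_eq]
  have h1 : (∫ t in y..x, ‖Real.exp (c*t)‖) = ∫ t in y..x, Real.exp (c*t) := by
    congr 1; funext t; exact norm_of_nonneg (exp_pos _).le
  have h2 : (∫ t in y..x, Real.exp (c*t)) = c⁻¹ • ∫ t in c*y..c*x, Real.exp t := by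
    rw [← intervalIntegral.integral_comp_mul_left (fun t => Real.exp t) hc.ne']
  rw [h1, h2, integral_exp, smul_eq_mul]
  rw [div_eq_inv_mul]
  have : Real.exp (c*x) - Real.exp (c*y) ≤ Real.exp (c*x) := by
    have := exp_pos (c*y); linarith
  exact mul_le_mul_of_nonneg_left this (inv_pos.mpr hc).le

lemma integral_exp_mul_Iic {c : ℝ} (hc : 0 < c) (x : ℝ) :
    (∫ t in Iic x, Real.exp (c*t)) = Real.exp (c*x) / c := by
  refine tendsto_nhds_unique
    (intervalIntegral_tendsto_integral_Iic _ (exp_integrableOn_Iic hc x) tendsto_id) ?_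
  have heq : ∀ y : ℝ, (∫ t in y..x, Real.exp (c*t)) = c⁻¹ * (Real.exp (c*x) - Real.exp (c*y)) := by
    intro y
    have h2 : (∫ t in y..x, Real.exp (c*t)) = c⁻¹ • ∫ t in c*y..c*x, Real.exp t :=
      intervalIntegral.integral_comp_mul_left (fun t => Real.exp t) hc.ne'
    rw [h2, integral_exp, smul_eq_mul]
  simp only [id, heq]
  have h1 : Tendsto (fun y : ℝ => Real.exp (c*y)) atBot (𝓝 0) :=
    Real.tendsto_exp_atBot.comp (tendsto_id.const_mul_atBot hc)
  have h2 : Tendsto (fun y : ℝ => c⁻¹ * (Real.exp (c*x) - Real.exp (c*y))) atBot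
      (𝓝 (c⁻¹ * (Real.exp (c*x) - 0))) := (tendsto_const_nhds.sub h1).const_mul _
  simpa [div_eq_inv_mul] using h2

lemma Φ_le {c : ℝ} (hc : 0 < c) (x : ℝ) :
    Φ x ≤ Real.exp (c^2/2) / Real.sqrt (2*Real.pi) / c * Real.exp (c*x) := by
  have hbound : ∀ t : ℝ, φ t ≤ Real.exp (c^2/2) / Real.sqrt (2*Real.pi) * Real.exp (c*t) := by
    intro t
    have h1 : Real.exp (-t^2/2) ≤ Real.exp (c^2/2) * Real.exp (c*t) := by
      rw [← Real.exp_add]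
      apply Real.exp_le_exp.mpr
      nlinarith [sq_nonneg (t + c)]
    have hs : 0 < Real.sqrt (2*Real.pi) := sqrt_pos.mpr (by positivity)
    rw [φ, div_mul_eq_mul_div, div_le_div_iff_of_pos_right hs]
    linarith
  have hmono : Φ x ≤ ∫ t in Iic x, Real.exp (c^2/2) / Real.sqrt (2*Real.pi) * Real.exp (c*t) := by
    refine setIntegral_mono_on φ_integrable.integrableOn
      (((exp_integrableOn_Iic hc x)).const_mul _) measurableSet_Iic fun t _ => hbound t
  rw [integral_const_mul, integral_exp_mul_Iic hc] at hmono
  calc Φ x ≤ _ := hmono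
  _ = _ := by ring

end Stmt1Aux

theorem stmt1 (v b : ℝ) (hb : 0 < b) :
    Φ v < (Real.exp (b^2) * Φ (v+b) + Real.exp (b^2/2 - b*v) * Φ (v-b)) /
      (1 + Real.exp (b^2/2 - b*v)) := by
  open Stmt1Aux in
  set g : ℝ → ℝ := fun w => Real.exp (b^2) * Φ (w+b) + Real.exp (b^2/2 - b*w) * Φ (w-b)
      - (1 + Real.exp (b^2/2 - b*w)) * Φ w with hg
  have hD : ∀ w, HasDerivAt g (b * Real.exp (b^2/2 - b*w) * (Φ w - Φ (w-b))) w := by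
    intro w
    have h1 : HasDerivAt (fun w => Φ (w+b)) (φ (w+b)) w := by
      have := (Φ_hasDeriv (w+b)).comp w ((hasDerivAt_id w).add_const b)
      simpa using (show HasDerivAt (fun w => Φ (w + b)) _ w from this)
    have h2 : HasDerivAt (fun w => Φ (w-b)) (φ (w-b)) w := by
      have := (Φ_hasDeriv (w-b)).comp w ((hasDerivAt_id w).sub_const b)
      simpa using (show HasDerivAt (fun w => Φ (w - b)) _ w from this)
    have hE : HasDerivAt (fun w => Real.exp (b^2/2 - b*w)) (-b * Real.exp (b^2/2 - b*w)) w := by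
      have hlin : HasDerivAt (fun w : ℝ => b^2/2 - b*w) (-b) w := by
        simpa using ((hasDerivAt_id w).const_mul b).const_sub (b^2/2)
      simpa [mul_comm] using hlin.exp
    have hmain := ((h1.const_mul (Real.exp (b^2))).add (hE.mul h2)).sub
      (((hasDerivAt_const w (1:ℝ)).add hE).mul (Φ_hasDeriv w))
    have key1 : Real.exp (b^2) * φ (w+b) = Real.exp (b^2/2 - b*w) * φ w := by
      simp only [φ]
      rw [mul_div_assoc', mul_div_assoc', ← Real.exp_add, ← Real.exp_add]
      ring_nf
    have key2 : Real.exp (b^2/2 - b*w) * φ (w-b) = φ w := by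
      simp only [φ]
      rw [mul_div_assoc', ← Real.exp_add]
      ring_nf
    have heq : b * Real.exp (b^2/2 - b*w) * (Φ w - Φ (w-b)) =
        Real.exp (b^2) * φ (w+b) + (-b * Real.exp (b^2/2 - b*w) * Φ (w-b)
          + Real.exp (b^2/2 - b*w) * φ (w-b))
        - ((0 + -b * Real.exp (b^2/2 - b*w)) * Φ w + (1 + Real.exp (b^2/2 - b*w)) * φ w) := by
      rw [key1, key2]; ring
    rw [heq]
    exact hmain
  have hsm : StrictMono g := strictMono_of_hasDerivAt_pos hD (fun w =>
    mul_pos (mul_pos hb (Real.exp_pos _)) (sub_pos.mpr (Φ_lt (by linarith))))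
  have hc : (0:ℝ) < 2*b := by linarith
  set K : ℝ := Real.exp ((2*b)^2/2) / Real.sqrt (2*Real.pi) / (2*b) with hK
  have hK0 : 0 ≤ K := by rw [hK]; positivity
  have hΦb : ∀ x, Φ x ≤ K * Real.exp (2*b*x) := fun x => Φ_le hc x
  have texp : ∀ C a d : ℝ, 0 < a → Tendsto (fun w => C * Real.exp (a*w + d)) atBot (𝓝 0) := by
    intro C a d ha
    have h := Real.tendsto_exp_atBot.comp
      (tendsto_atBot_add_const_right _ d (tendsto_id.const_mul_atBot ha))
    simpa using h.const_mul C
  have squeeze0 : ∀ f u : ℝ → ℝ, (∀ w, 0 ≤ f w) → (∀ w, f w ≤ u w) →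
      Tendsto u atBot (𝓝 0) → Tendsto f atBot (𝓝 0) := fun f u h0 hle hu =>
    tendsto_of_tendsto_of_tendsto_of_le_of_le tendsto_const_nhds hu h0 hle
  have hT1 : Tendsto (fun w => Real.exp (b^2) * Φ (w+b)) atBot (𝓝 0) := by
    refine squeeze0 _ (fun w => (Real.exp (b^2) * K) * Real.exp (2*b*w + 2*b^2))
      (fun w => mul_nonneg (Real.exp_pos _).le (Φ_nonneg _)) (fun w => ?_)
      (texp _ _ _ hc)
    calc Real.exp (b^2) * Φ (w+b) ≤ Real.exp (b^2) * (K * Real.exp (2*b*(w+b))) :=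
          mul_le_mul_of_nonneg_left (hΦb (w+b)) (Real.exp_pos _).le
      _ = (Real.exp (b^2) * K) * Real.exp (2*b*w + 2*b^2) := by
          rw [show 2*b*(w+b) = 2*b*w + 2*b^2 by ring]; ring
  have hT2 : Tendsto (fun w => Real.exp (b^2/2 - b*w) * Φ (w-b)) atBot (𝓝 0) := by
    refine squeeze0 _ (fun w => K * Real.exp (b*w + (b^2/2 - 2*b^2)))
      (fun w => mul_nonneg (Real.exp_pos _).le (Φ_nonneg _)) (fun w => ?_) (texp _ _ _ hb)
    calc Real.exp (b^2/2 - b*w) * Φ (w-b)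
        ≤ Real.exp (b^2/2 - b*w) * (K * Real.exp (2*b*(w-b))) :=
          mul_le_mul_of_nonneg_left (hΦb (w-b)) (Real.exp_pos _).le
      _ = K * Real.exp (b*w + (b^2/2 - 2*b^2)) := by
          rw [mul_left_comm, ← Real.exp_add]; ring_nf
  have hT3 : Tendsto (fun w => Φ w) atBot (𝓝 0) := by
    refine squeeze0 _ (fun w => K * Real.exp (2*b*w + 0)) (fun w => Φ_nonneg w)
      (fun w => ?_) (texp _ _ _ hc)
    simpa using hΦb w
  have hT4 : Tendsto (fun w => Real.exp (b^2/2 - b*w) * Φ w) atBot (𝓝 0) := by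
    refine squeeze0 _ (fun w => K * Real.exp (b*w + b^2/2))
      (fun w => mul_nonneg (Real.exp_pos _).le (Φ_nonneg _)) (fun w => ?_) (texp _ _ _ hb)
    calc Real.exp (b^2/2 - b*w) * Φ w
        ≤ Real.exp (b^2/2 - b*w) * (K * Real.exp (2*b*w)) :=
          mul_le_mul_of_nonneg_left (hΦb w) (Real.exp_pos _).le
      _ = K * Real.exp (b*w + b^2/2) := by
          rw [mul_left_comm, ← Real.exp_add]; ring_nf
  have hlim : Tendsto g atBot (𝓝 0) := by
    have h := (hT1.add hT2).sub (hT3.add hT4)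
    simp only [add_zero, sub_zero] at h
    refine h.congr fun w => ?_
    rw [hg]; ring
  have h0 : ∀ w, 0 < g w := by
    intro w
    have h1 : (0:ℝ) ≤ g (w-1) :=
      le_of_tendsto hlim (eventually_atBot.mpr ⟨w-1, fun u hu => hsm.monotone hu⟩)
    have h2 := hsm (show w-1 < w by linarith)
    linarith
  have hDpos : 0 < 1 + Real.exp (b^2/2 - b*v) := by positivity
  rw [lt_div_iff₀ hDpos]
  have h := h0 v
  simp only [hg] at h
  nlinarith [h]
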